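/- CATE reweighting identity (proved within the efficient-influence-function theorem for discrete treatments and groups): Let 𝒜 and 𝒱 be measurable spaces with measurable singletons, let A : Ω → 𝒜, V : Ω → 𝒱, S : Ω → 𝒮, W : Ω → 𝒲, Z : Ω → 𝒵 be measurable, and fix a ∈ 𝒜 and v ∈ 𝒱 with P({A=a} ∩ {V=v}) > 0 and P(V=v) > 0. Set π_{a|v} := P({A=a} ∩ {V=v}) / P(V=v), and let α be a version of E[1{A=a} | σ(S,V,W)] with α > 0 P-almost surely. Let φ : 𝒮×𝒵 → ℝ be measurable with φ(S,Z) integrable under the conditional measure P(· | {A=a} ∩ {V=v}), and suppose that under this conditional measure E[φ(S,Z) | σ(S,W)] = π_{a|v}/α almost surely. Then, for every bounded measurable g : 𝒮×𝒲 → ℝ, ∫_Ω 1{A=a}·1{V=v}·φ(S,Z)·g(S,W) dP = π_{a|v} · ∫_Ω 1{V=v}·g(S,W) dP. -/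

import Mathlib

open MeasureTheory ProbabilityTheory

/-- CATE reweighting identity. -/
theorem cate_reweighting_identity
    {Ω 𝓐 𝓥 𝓢 𝓦 𝓩 : Type*}
    [MeasurableSpace Ω]
    [MeasurableSpace 𝓐] [MeasurableSingletonClass 𝓐]
    [MeasurableSpace 𝓥] [MeasurableSingletonClass 𝓥]
    [MeasurableSpace 𝓢] [MeasurableSpace 𝓦] [MeasurableSpace 𝓩]
    (P : Measure Ω) [IsProbabilityMeasure P]
    (A : Ω → 𝓐) (V : Ω → 𝓥) (S : Ω → 𝓢) (W : Ω → 𝓦) (Z : Ω → 𝓩)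
    (hA : Measurable A) (hV : Measurable V) (hS : Measurable S)
    (hW : Measurable W) (hZ : Measurable Z)
    (a : 𝓐) (v : 𝓥)
    (hav : 0 < P (A ⁻¹' {a} ∩ V ⁻¹' {v})) (hv : 0 < P (V ⁻¹' {v}))
    (α : Ω → ℝ)
    -- α is a version of E[1{A = a} | σ(S, V, W)]
    (hα : α =ᵐ[P]
      P[((A ⁻¹' {a}).indicator (fun _ => (1 : ℝ))) |
        MeasurableSpace.comap (fun ω => (S ω, V ω, W ω)) inferInstance])
    (hαpos : ∀ᵐ ω ∂P, 0 < α ω)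
    (φ : 𝓢 × 𝓩 → ℝ) (hφ : Measurable φ)
    (hφint : Integrable (fun ω => φ (S ω, Z ω))
      (ProbabilityTheory.cond P (A ⁻¹' {a} ∩ V ⁻¹' {v})))
    -- E[φ(S,Z) | σ(S,W)] = π_{a|v} / α  a.s. under P(· | {A=a} ∩ {V=v})
    (hcond :
      (ProbabilityTheory.cond P (A ⁻¹' {a} ∩ V ⁻¹' {v}))[(fun ω => φ (S ω, Z ω)) |
        MeasurableSpace.comap (fun ω => (S ω, W ω)) inferInstance]
        =ᵐ[ProbabilityTheory.cond P (A ⁻¹' {a} ∩ V ⁻¹' {v})]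
      fun ω => (P (A ⁻¹' {a} ∩ V ⁻¹' {v})).toReal / (P (V ⁻¹' {v})).toReal / α ω) :
    ∀ g : 𝓢 × 𝓦 → ℝ, Measurable g → (∃ C : ℝ, ∀ p, |g p| ≤ C) →
      (∫ ω in A ⁻¹' {a} ∩ V ⁻¹' {v}, φ (S ω, Z ω) * g (S ω, W ω) ∂P)
        = ((P (A ⁻¹' {a} ∩ V ⁻¹' {v})).toReal / (P (V ⁻¹' {v})).toReal) *
            ∫ ω in V ⁻¹' {v}, g (S ω, W ω) ∂P := by
  intro g hg hgbdd
  obtain ⟨C, hC⟩ := hgbdd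
  set E : Set Ω := A ⁻¹' {a} ∩ V ⁻¹' {v} with hEdef
  have hEm : MeasurableSet E :=
    (hA (measurableSet_singleton a)).inter (hV (measurableSet_singleton v))
  have hE0 : P E ≠ 0 := hav.ne'
  have hEtop : P E ≠ ⊤ := measure_ne_top P E
  set Q := ProbabilityTheory.cond P E with hQdef
  haveI : IsProbabilityMeasure Q := cond_isProbabilityMeasure hE0
  have hQP : ∀ {f f' : Ω → ℝ}, f =ᵐ[P] f' → f =ᵐ[Q] f' := by
    intro f f' h
    rw [hQdef, ProbabilityTheory.cond]
    exact Measure.ae_smul_measure (ae_restrict_of_ae h) _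
  have hm₂ : MeasurableSpace.comap (fun ω : Ω => (S ω, W ω)) inferInstance
      ≤ ‹MeasurableSpace Ω› := (hS.prodMk hW).comap_le
  have hm₃ : MeasurableSpace.comap (fun ω : Ω => (S ω, V ω, W ω)) inferInstance
      ≤ ‹MeasurableSpace Ω› := (hS.prodMk (hV.prodMk hW)).comap_le
  set π : ℝ := (P E).toReal / (P (V ⁻¹' {v})).toReal with hπdef
  have hπ0 : π ≠ 0 := by
    apply div_ne_zero
    · exact ENNReal.toReal_ne_zero.mpr ⟨hE0, hEtop⟩
    · exact ENNReal.toReal_ne_zero.mpr ⟨hv.ne', measure_ne_top _ _⟩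
  set fG : Ω → ℝ := fun ω => g (S ω, W ω) with hfGdef
  set fφ : Ω → ℝ := fun ω => φ (S ω, Z ω) with hfφdef
  set α' : Ω → ℝ := P[((A ⁻¹' {a}).indicator (fun _ => (1 : ℝ))) |
    MeasurableSpace.comap (fun ω => (S ω, V ω, W ω)) inferInstance] with hα'def
  have hQαα' : α =ᵐ[Q] α' := hQP hα
  have hα'pos : ∀ᵐ ω ∂P, 0 < α' ω := by
    filter_upwards [hαpos, hα] with ω h1 h2
    rw [← h2]; exact h1
  -- measurability of fG w.r.t. m₂
  have hSW2 : Measurable[MeasurableSpace.comap (fun ω : Ω => (S ω, W ω)) inferInstance]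
      (fun ω : Ω => (S ω, W ω)) := Measurable.of_comap_le le_rfl
  have hfGsm : StronglyMeasurable[MeasurableSpace.comap
      (fun ω : Ω => (S ω, W ω)) inferInstance] fG := (hg.comp hSW2).stronglyMeasurable
  -- integrability step A
  have hfGφ_int : Integrable (fG * fφ) Q :=
    hφint.bdd_mul ((hg.comp (hS.prodMk hW)).aestronglyMeasurable) (c := C) (Filter.Eventually.of_forall fun ω => by
      simpa [hfGdef, Real.norm_eq_abs] using hC (S ω, W ω))
  have mulA : Q[fG * fφ | MeasurableSpace.comap (fun ω => (S ω, W ω)) inferInstance]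
      =ᵐ[Q] fG * Q[fφ | MeasurableSpace.comap (fun ω => (S ω, W ω)) inferInstance] :=
    condExp_mul_of_stronglyMeasurable_left hfGsm hfGφ_int hφint
  have h1 : Integrable (fun ω => π / α ω) Q := integrable_condExp.congr hcond
  have h2 : Integrable (fun ω => fG ω * (π / α ω)) Q :=
    h1.bdd_mul ((hg.comp (hS.prodMk hW)).aestronglyMeasurable) (c := C) (Filter.Eventually.of_forall fun ω => by
      simpa [hfGdef, Real.norm_eq_abs] using hC (S ω, W ω))
  have h3 : Integrable (fun ω => fG ω / α' ω) Q := by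
    refine (h2.const_mul π⁻¹).congr ?_
    filter_upwards [hQαα'] with ω hω
    rw [← hω, show π⁻¹ * (fG ω * (π / α ω)) = (π⁻¹ * π) * (fG ω / α ω) by ring,
      inv_mul_cancel₀ hπ0, one_mul]
  have h4 : IntegrableOn (fun ω => fG ω / α' ω) E P := by
    rw [hQdef, ProbabilityTheory.cond] at h3
    exact (integrable_smul_measure (by simp [hEtop]) (by simp [hE0])).mp h3
  have h5 : Integrable (E.indicator (fun ω => fG ω / α' ω)) P :=
    (integrable_indicator_iff hEm).mpr h4
  -- step B setup
  set X : Ω → ℝ := (A ⁻¹' {a}).indicator (fun _ => (1 : ℝ)) with hXdef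
  have hXint : Integrable X P :=
    (integrable_const (1 : ℝ)).indicator (hA (measurableSet_singleton a))
  set h : Ω → ℝ := fun ω => (V ⁻¹' {v}).indicator (fun _ => (1 : ℝ)) ω * (fG ω / α' ω)
    with hhdef
  have hpair3 : Measurable[MeasurableSpace.comap
      (fun ω : Ω => (S ω, V ω, W ω)) inferInstance] (fun ω : Ω => (S ω, V ω, W ω)) :=
    Measurable.of_comap_le le_rfl
  have hVm : Measurable[MeasurableSpace.comap
      (fun ω : Ω => (S ω, V ω, W ω)) inferInstance] V :=
    (measurable_fst.comp measurable_snd).comp hpair3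
  have hSW3 : Measurable[MeasurableSpace.comap
      (fun ω : Ω => (S ω, V ω, W ω)) inferInstance] (fun ω : Ω => (S ω, W ω)) :=
    (measurable_fst.prodMk (measurable_snd.comp measurable_snd)).comp hpair3
  have hα'sm : StronglyMeasurable[MeasurableSpace.comap
      (fun ω : Ω => (S ω, V ω, W ω)) inferInstance] α' := stronglyMeasurable_condExp
  have hhm : StronglyMeasurable[MeasurableSpace.comap
      (fun ω : Ω => (S ω, V ω, W ω)) inferInstance] h := by
    apply Measurable.stronglyMeasurable
    exact ((measurable_const.indicator (hVm (measurableSet_singleton v))).mul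
      ((hg.comp hSW3).div hα'sm.measurable))
  have hpt : ∀ ω, h ω * X ω = E.indicator (fun ω => fG ω / α' ω) ω := by
    intro ω
    by_cases ha : A ω = a <;> by_cases hvv : V ω = v <;>
      simp [hhdef, hXdef, hEdef, Set.indicator_apply, ha, hvv]
  have hhX_int : Integrable (h * X) P :=
    h5.congr (Filter.Eventually.of_forall fun ω => (hpt ω).symm)
  have mulB : P[h * X | MeasurableSpace.comap (fun ω => (S ω, V ω, W ω)) inferInstance]
      =ᵐ[P] h * P[X | MeasurableSpace.comap (fun ω => (S ω, V ω, W ω)) inferInstance] :=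
    condExp_mul_of_stronglyMeasurable_left hhm hhX_int hXint
  -- step B computation
  have stepB : ∫ ω, E.indicator (fun ω => fG ω / α' ω) ω ∂P
      = ∫ ω in V ⁻¹' {v}, fG ω ∂P := by
    rw [← integral_indicator (hV (measurableSet_singleton v))]
    calc ∫ ω, E.indicator (fun ω => fG ω / α' ω) ω ∂P
        = ∫ ω, (h * X) ω ∂P := integral_congr_ae
          (Filter.Eventually.of_forall fun ω => (hpt ω).symm)
      _ = ∫ ω, (P[h * X | MeasurableSpace.comap
            (fun ω => (S ω, V ω, W ω)) inferInstance]) ω ∂P :=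
          (integral_condExp hm₃).symm
      _ = ∫ ω, (h * P[X | MeasurableSpace.comap
            (fun ω => (S ω, V ω, W ω)) inferInstance]) ω ∂P := integral_congr_ae mulB
      _ = ∫ ω, (V ⁻¹' {v}).indicator fG ω ∂P := by
          refine integral_congr_ae ?_
          filter_upwards [hα'pos] with ω hω
          simp only [Pi.mul_apply, hhdef, ← hα'def]
          by_cases hvv : V ω = v <;>
            simp [Set.indicator_apply, hvv, div_mul_cancel₀ _ hω.ne']
  -- step A computation
  have stepA : ∫ ω, (fG * fφ) ω ∂Q = π * ∫ ω, fG ω / α' ω ∂Q := by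
    calc ∫ ω, (fG * fφ) ω ∂Q
        = ∫ ω, (Q[fG * fφ | MeasurableSpace.comap
            (fun ω => (S ω, W ω)) inferInstance]) ω ∂Q :=
          (integral_condExp hm₂).symm
      _ = ∫ ω, (fG * Q[fφ | MeasurableSpace.comap
            (fun ω => (S ω, W ω)) inferInstance]) ω ∂Q := integral_congr_ae mulA
      _ = ∫ ω, π * (fG ω / α' ω) ∂Q := by
          refine integral_congr_ae ?_
          filter_upwards [hcond, hQαα'] with ω h1 h2
          simp only [Pi.mul_apply]
          rw [h1, ← h2, hπdef]; ring
      _ = π * ∫ ω, fG ω / α' ω ∂Q := integral_const_mul π _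
  -- convert Q-integrals to restricted integrals
  have hconv : ∀ f : Ω → ℝ, ∫ ω, f ω ∂Q = (P E).toReal⁻¹ * ∫ ω in E, f ω ∂P := by
    intro f
    rw [hQdef, ProbabilityTheory.cond, integral_smul_measure, ENNReal.toReal_inv, smul_eq_mul]
  have hPE0 : (P E).toReal ≠ 0 := ENNReal.toReal_ne_zero.mpr ⟨hE0, hEtop⟩
  -- assemble
  have lhs_eq : (∫ ω in E, φ (S ω, Z ω) * g (S ω, W ω) ∂P)
      = (P E).toReal * ∫ ω, (fG * fφ) ω ∂Q := by
    rw [hconv, ← mul_assoc, mul_inv_cancel₀ hPE0, one_mul]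
    refine setIntegral_congr_ae hEm ?_
    exact Filter.Eventually.of_forall fun ω _ => (mul_comm _ _)
  rw [lhs_eq, stepA, hconv, ← integral_indicator hEm, stepB]
  rw [show (P E).toReal * (π * ((P E).toReal⁻¹ * (∫ ω in V ⁻¹' {v}, fG ω ∂P)))
      = ((P E).toReal * (P E).toReal⁻¹) * (π * ∫ ω in V ⁻¹' {v}, fG ω ∂P) by ring,
    mul_inv_cancel₀ hPE0, one_mul]
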